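/- For every D ⊆ E admitting a d-flow and every e ∈ E such that D contains exactly one of e and rev e (i.e. |D ∩ {e, rev e}| = 1), it holds that φ_e(ψ_e(D)) = D. -/

import Mathlib

open Finset

section Defs

variable {V : Type*}

/-- Reversal of a directed edge. -/
def drev (e : V × V) : V × V := (e.2, e.1)

/-- `K` is a subgraph of the (symmetric) edge set `E`: it contains either both or
neither of `e` and `drev e` for every `e ∈ E`. -/
def IsSubgraph [DecidableEq V] (E K : Finset (V × V)) : Prop :=
  K ⊆ E ∧ ∀ e ∈ E, (e ∈ K ↔ drev e ∈ K)

/-- `L` is an orientation of the (symmetric) edge set `E`: it contains exactly one of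
`e` and `drev e` for every `e ∈ E`. -/
def IsOrientation [DecidableEq V] (E L : Finset (V × V)) : Prop :=
  L ⊆ E ∧ ∀ e ∈ E, (e ∈ L ↔ drev e ∉ L)

variable [Fintype V] [DecidableEq V]

/-- `f` is a `d`-flow on the directed subgraph `D` of the graph with edge set `E`. -/
def IsFlow (E D : Finset (V × V)) (d : V → ℤ) (f : V × V → ℝ) : Prop :=
  (∀ e ∈ E, 0 ≤ f e ∧ f e ≤ 1) ∧
  (∀ e, e ∉ D → f e = 0) ∧
  ∀ u : V,
    ((Finset.univ.filter (fun v : V => (u, v) ∈ E)).sum fun v => f (u, v)) -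
      ((Finset.univ.filter (fun v : V => (v, u) ∈ E)).sum fun v => f (v, u)) = (d u : ℝ)

/-- A `d`-flow exists on `D`. -/
def AdmitsFlow (E D : Finset (V × V)) (d : V → ℤ) : Prop :=
  ∃ f : V × V → ℝ, IsFlow E D d f

/-- The `w`-cost of a flow `f`. -/
def flowCost (E : Finset (V × V)) (w : V × V → ℝ) (f : V × V → ℝ) : ℝ :=
  ∑ e ∈ E, w e * f e

/-- `f` is a min-cost `d`-flow on `D`. -/
def IsMinCostFlow (E D : Finset (V × V)) (d : V → ℤ) (w : V × V → ℝ)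
    (f : V × V → ℝ) : Prop :=
  IsFlow E D d f ∧ ∀ g : V × V → ℝ, IsFlow E D d g → flowCost E w f ≤ flowCost E w g

/-- The `{0,1}`-valued function determined by a set of edges. -/
def ind (S : Finset (V × V)) : V × V → ℝ := fun e => if e ∈ S then 1 else 0

/-- `A` assigns to every flow-admitting `D ⊆ E` the (edge set of the) unique,
`{0,1}`-valued min-cost `d`-flow on `D`. -/
def GoodA (E : Finset (V × V)) (d : V → ℤ) (w : V × V → ℝ)
    (A : Finset (V × V) → Finset (V × V)) : Prop :=
  ∀ D : Finset (V × V), D ⊆ E → AdmitsFlow E D d →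
    IsMinCostFlow E D d w (ind (A D)) ∧
    ∀ f : V × V → ℝ, IsMinCostFlow E D d w f → f = ind (A D)

/-- `A(D) = A(D')`: both `D` and `D'` admit a `d`-flow and their unique min-cost
`d`-flows coincide.  (If one of them admits no `d`-flow this is false.) -/
def AEq (E : Finset (V × V)) (d : V → ℤ) (A : Finset (V × V) → Finset (V × V))
    (D D' : Finset (V × V)) : Prop :=
  AdmitsFlow E D d ∧ AdmitsFlow E D' d ∧ A D = A D'

/-- `D ⊕ e := (D ∪ {e}) \ {drev e}`. -/
def oplus (D : Finset (V × V)) (e : V × V) : Finset (V × V) := insert e D \ {drev e}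

/-- `D + e := D ∪ {e, drev e}`. -/
def padd (D : Finset (V × V)) (e : V × V) : Finset (V × V) := D ∪ {e, drev e}

/-- `D − e := D \ {e, drev e}`. -/
def psub (D : Finset (V × V)) (e : V × V) : Finset (V × V) := D \ {e, drev e}

/-- The representative of `{e, drev e}` lying in the reference orientation `E'`. -/
def chi (E' : Finset (V × V)) (e : V × V) : V × V := if e ∈ E' then e else drev e

/-- The map `φ_e`. -/
noncomputable def phiE (E : Finset (V × V)) (d : V → ℤ)
    (A : Finset (V × V) → Finset (V × V)) (E' : Finset (V × V))
    (e : V × V) (D : Finset (V × V)) : Finset (V × V) := by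
  classical
  exact
    if ¬ AEq E d A D (oplus D e) then oplus D (drev e)
    else if ¬ AEq E d A D (oplus D (drev e)) then oplus D e
    else if e ∈ D then oplus D (chi E' e) else oplus D (drev (chi E' e))

/-- The map `ψ_e`. -/
noncomputable def psiE (E : Finset (V × V)) (d : V → ℤ)
    (A : Finset (V × V) → Finset (V × V)) (E' : Finset (V × V))
    (e : V × V) (D : Finset (V × V)) : Finset (V × V) := by
  classical
  exact
    if ¬ AEq E d A D (padd D e) then psub D e
    else if ¬ AEq E d A D (psub D e) then padd D e
    else if chi E' e ∈ D then padd D e else psub D e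

end Defs

section AuxLemmas

variable {V : Type*} [Fintype V] [DecidableEq V]

lemma drev_drev (e : V × V) : drev (drev e) = e := rfl

lemma ind_injective {S T : Finset (V × V)} (h : ind S = ind T) : S = T := by
  ext x
  have hx := congrFun h x
  simp only [ind] at hx
  by_cases hS : x ∈ S <;> by_cases hT : x ∈ T <;> simp [hS, hT] at hx ⊢

lemma IsFlow.mono {E D D' : Finset (V × V)} {d : V → ℤ} {f : V × V → ℝ}
    (h : IsFlow E D d f) (hDD' : D ⊆ D') : IsFlow E D' d f :=
  ⟨h.1, fun e he => h.2.1 e (fun hc => he (hDD' hc)), h.2.2⟩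

lemma A_subset {E D : Finset (V × V)} {d : V → ℤ} {w : V × V → ℝ}
    {A : Finset (V × V) → Finset (V × V)} (hA : GoodA E d w A)
    (hD : D ⊆ E) (hDf : AdmitsFlow E D d) : A D ⊆ D := by
  intro x hx
  by_contra hxD
  have h0 := ((hA D hD hDf).1.1).2.1 x hxD
  simp [ind, hx] at h0

lemma sandwich {E D1 D2 : Finset (V × V)} {d : V → ℤ} {w : V × V → ℝ}
    {A : Finset (V × V) → Finset (V × V)} (hA : GoodA E d w A)
    (h12 : D1 ⊆ D2) (h2 : D2 ⊆ E) (hf2 : AdmitsFlow E D2 d) (hsub : A D2 ⊆ D1) :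
    AdmitsFlow E D1 d ∧ A D1 = A D2 := by
  obtain ⟨hmin2, _⟩ := hA D2 h2 hf2
  have hflow1 : IsFlow E D1 d (ind (A D2)) := by
    refine ⟨hmin2.1.1, ?_, hmin2.1.2.2⟩
    intro x hx
    have : x ∉ A D2 := fun h => hx (hsub h)
    simp [ind, this]
  have hf1 : AdmitsFlow E D1 d := ⟨_, hflow1⟩
  have hmin1 : IsMinCostFlow E D1 d w (ind (A D2)) :=
    ⟨hflow1, fun g hg => hmin2.2 g (hg.mono h12)⟩
  have := (hA D1 (h12.trans h2) hf1).2 _ hmin1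
  exact ⟨hf1, (ind_injective this).symm⟩

lemma cost_lt {E D D' : Finset (V × V)} {d : V → ℤ} {w : V × V → ℝ}
    {A : Finset (V × V) → Finset (V × V)} (hA : GoodA E d w A)
    (hDD' : D ⊆ D') (hD' : D' ⊆ E) (hDf : AdmitsFlow E D d) (hne : A D' ≠ A D) :
    flowCost E w (ind (A D')) < flowCost E w (ind (A D)) := by
  have hD : D ⊆ E := hDD'.trans hD'
  have hDf' : AdmitsFlow E D' d := by
    obtain ⟨f, hf⟩ := hDf; exact ⟨f, hf.mono hDD'⟩
  obtain ⟨hmin, huniq⟩ := hA D hD hDf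
  obtain ⟨hmin', huniq'⟩ := hA D' hD' hDf'
  have hle : flowCost E w (ind (A D')) ≤ flowCost E w (ind (A D)) :=
    hmin'.2 _ (hmin.1.mono hDD')
  rcases lt_or_eq_of_le hle with h | h
  · exact h
  · exfalso
    have hmc : IsMinCostFlow E D' d w (ind (A D)) :=
      ⟨hmin.1.mono hDD', fun g hg => h ▸ hmin'.2 g hg⟩
    exact hne (ind_injective (huniq' _ hmc)).symm


set_option linter.unusedSectionVars false

lemma sum_if_fst {E : Finset (V × V)} {p : V × V} (hp : p ∈ E) (u : V) (c : ℝ) :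
    (∑ v ∈ Finset.univ.filter (fun v => (u, v) ∈ E), if (u, v) = p then c else 0)
      = if u = p.1 then c else 0 := by
  obtain ⟨a, b⟩ := p
  by_cases hu : u = a
  · subst hu
    rw [if_pos rfl]
    have hcong : ∀ v ∈ Finset.univ.filter (fun v => (u, v) ∈ E),
        (if (u, v) = (u, b) then c else 0) = if v = b then c else 0 := by
      intro v _; simp [Prod.ext_iff]
    rw [Finset.sum_congr rfl hcong, Finset.sum_ite_eq' _ b (fun _ => c)]
    simp [hp]
  · rw [if_neg hu]
    refine Finset.sum_eq_zero fun v _ => ?_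
    simp [Prod.ext_iff, hu]

lemma sum_if_snd {E : Finset (V × V)} {p : V × V} (hp : p ∈ E) (u : V) (c : ℝ) :
    (∑ v ∈ Finset.univ.filter (fun v => (v, u) ∈ E), if (v, u) = p then c else 0)
      = if u = p.2 then c else 0 := by
  obtain ⟨a, b⟩ := p
  by_cases hu : u = b
  · subst hu
    rw [if_pos rfl]
    have hcong : ∀ v ∈ Finset.univ.filter (fun v => (v, u) ∈ E),
        (if (v, u) = (a, u) then c else 0) = if v = a then c else 0 := by
      intro v _; simp [Prod.ext_iff]
    rw [Finset.sum_congr rfl hcong, Finset.sum_ite_eq' _ a (fun _ => c)]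
    simp [hp]
  · rw [if_neg hu]
    refine Finset.sum_eq_zero fun v _ => ?_
    simp [Prod.ext_iff, hu]

lemma ne_drev {e : V × V} (h : e.1 ≠ e.2) : e ≠ drev e := by
  intro hc
  exact h (congrArg Prod.fst hc)

lemma cancel_conserv {E D : Finset (V × V)} {d : V → ℤ} {h : V × V → ℝ} {e : V × V}
    (heE : e ∈ E) (hrevE : drev e ∈ E) (hene : e.1 ≠ e.2)
    (hflow : IsFlow E D d h) (hc : h e = h (drev e)) :
    IsFlow E D d (fun x => if x = e ∨ x = drev e then 0 else h x) := by
  have hdecomp : ∀ x : V × V, (if x = e ∨ x = drev e then 0 else h x)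
      = h x - (if x = e then h e else 0) - (if x = drev e then h (drev e) else 0) := by
    intro x
    by_cases h1 : x = e
    · subst h1
      have h2 : x ≠ drev x := ne_drev hene
      rw [if_pos (Or.inl rfl), if_pos rfl, if_neg h2]; ring
    · by_cases h2 : x = drev e
      · subst h2; simp [h1]
      · simp [h1, h2]
  refine ⟨?_, ?_, ?_⟩
  · intro x hx
    by_cases hxe : x = e ∨ x = drev e
    · simp [hxe]
    · simpa [hxe] using hflow.1 x hx
  · intro x hx
    by_cases hxe : x = e ∨ x = drev e
    · simp [hxe]
    · simpa [hxe] using hflow.2.1 x hx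
  · intro u
    have hcons := hflow.2.2 u
    simp only [hdecomp, Finset.sum_sub_distrib]
    rw [sum_if_fst heE u (h e), sum_if_fst hrevE u (h (drev e)),
        sum_if_snd heE u (h e), sum_if_snd hrevE u (h (drev e))]
    have hd1 : (drev e).1 = e.2 := rfl
    have hd2 : (drev e).2 = e.1 := rfl
    rw [hd1, hd2]
    by_cases h1 : u = e.1
    · subst h1
      simp only [if_pos rfl, if_neg hene, if_true]
      linarith
    · by_cases h2 : u = e.2
      · subst h2
        simp only [if_pos rfl, if_neg (Ne.symm hene), if_neg h1, if_true]
        linarith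
      · simp only [if_neg h1, if_neg h2]
        linarith

lemma cancel_cost {E : Finset (V × V)} {w : V × V → ℝ} {h : V × V → ℝ} {e : V × V}
    (heE : e ∈ E) (hrevE : drev e ∈ E) (hene : e.1 ≠ e.2) :
    flowCost E w (fun x => if x = e ∨ x = drev e then 0 else h x)
      = flowCost E w h - w e * h e - w (drev e) * h (drev e) := by
  unfold flowCost
  have hdecomp : ∀ x ∈ E, w x * (if x = e ∨ x = drev e then 0 else h x)
      = w x * h x - (if x = e then w e * h e else 0)
          - (if x = drev e then w (drev e) * h (drev e) else 0) := by
    intro x _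
    by_cases h1 : x = e
    · subst h1
      have h2 : x ≠ drev x := ne_drev hene
      rw [if_pos (Or.inl rfl), if_pos rfl, if_neg h2]; ring
    · by_cases h2 : x = drev e
      · subst h2; simp [h1]
      · simp [h1, h2]
  rw [Finset.sum_congr rfl hdecomp]
  simp only [Finset.sum_sub_distrib]
  rw [Finset.sum_ite_eq' E e (fun _ => w e * h e), Finset.sum_ite_eq' E (drev e) (fun _ => w (drev e) * h (drev e))]
  simp [heE, hrevE]

lemma midpoint_flow {E D : Finset (V × V)} {d : V → ℤ} {f g : V × V → ℝ}
    (hf : IsFlow E D d f) (hg : IsFlow E D d g) :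
    IsFlow E D d (fun x => (f x + g x) / 2) := by
  refine ⟨fun x hx => ?_, fun x hx => ?_, fun u => ?_⟩
  · have h1 := hf.1 x hx; have h2 := hg.1 x hx
    constructor <;> simp only [] <;> linarith [h1.1, h1.2, h2.1, h2.2]
  · simp only []; rw [hf.2.1 x hx, hg.2.1 x hx]; norm_num
  · have h1 := hf.2.2 u; have h2 := hg.2.2 u
    have e1 : (∑ v ∈ Finset.univ.filter (fun v => (u, v) ∈ E), (f (u, v) + g (u, v)) / 2)
        = ((∑ v ∈ Finset.univ.filter (fun v => (u, v) ∈ E), f (u, v))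
            + (∑ v ∈ Finset.univ.filter (fun v => (u, v) ∈ E), g (u, v))) / 2 := by
      rw [← Finset.sum_add_distrib, Finset.sum_div]
    have e2 : (∑ v ∈ Finset.univ.filter (fun v => (v, u) ∈ E), (f (v, u) + g (v, u)) / 2)
        = ((∑ v ∈ Finset.univ.filter (fun v => (v, u) ∈ E), f (v, u))
            + (∑ v ∈ Finset.univ.filter (fun v => (v, u) ∈ E), g (v, u))) / 2 := by
      rw [← Finset.sum_add_distrib, Finset.sum_div]
    simp only []
    rw [e1, e2]
    linarith

lemma midpoint_cost {E : Finset (V × V)} {w f g : V × V → ℝ} :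
    flowCost E w (fun x => (f x + g x) / 2) = (flowCost E w f + flowCost E w g) / 2 := by
  unfold flowCost
  rw [← Finset.sum_add_distrib, Finset.sum_div]
  refine Finset.sum_congr rfl fun x _ => ?_
  ring

lemma A_not_both {E D : Finset (V × V)} {d : V → ℤ} {w : V × V → ℝ}
    {A : Finset (V × V) → Finset (V × V)} {e : V × V}
    (hA : GoodA E d w A) (hw : ∀ x ∈ E, 0 < w x)
    (heE : e ∈ E) (hrevE : drev e ∈ E) (hene : e.1 ≠ e.2)
    (hD : D ⊆ E) (hDf : AdmitsFlow E D d) (h1 : e ∈ A D) : drev e ∉ A D := by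
  intro h2
  obtain ⟨hmin, _⟩ := hA D hD hDf
  have hc : ind (A D) e = ind (A D) (drev e) := by simp [ind, h1, h2]
  have hflow' := cancel_conserv heE hrevE hene hmin.1 hc
  have hcost := cancel_cost (w := w) (h := ind (A D)) heE hrevE hene
  have hle := hmin.2 _ hflow'
  have he1 : ind (A D) e = 1 := by simp [ind, h1]
  have he2 : ind (A D) (drev e) = 1 := by simp [ind, h2]
  have hw1 := hw e heE; have hw2 := hw (drev e) hrevE
  rw [hcost, he1, he2] at hle
  linarith

lemma chi_drev {E E' : Finset (V × V)} (hE' : IsOrientation E E') {e : V × V}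
    (he : e ∈ E) : chi E' (drev e) = chi E' e := by
  have h := hE'.2 e he
  unfold chi
  by_cases h1 : e ∈ E'
  · have h2 : drev e ∉ E' := h.mp h1
    simp [h1, h2, drev_drev]
  · have h2 : drev e ∈ E' := by
      by_contra hc; exact h1 (h.mpr hc)
    simp [h1, h2]

lemma padd_drev (D : Finset (V × V)) (e : V × V) : padd D (drev e) = padd D e := by
  unfold padd
  rw [drev_drev, Finset.pair_comm]

lemma psub_drev (D : Finset (V × V)) (e : V × V) : psub D (drev e) = psub D e := by
  unfold psub
  rw [drev_drev, Finset.pair_comm]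

lemma psiE_drev {E : Finset (V × V)} {d : V → ℤ} {A : Finset (V × V) → Finset (V × V)}
    {E' : Finset (V × V)} (hE' : IsOrientation E E') {e : V × V} (he : e ∈ E)
    (D : Finset (V × V)) : psiE E d A E' (drev e) D = psiE E d A E' e D := by
  unfold psiE
  rw [padd_drev, psub_drev, chi_drev hE' he]

lemma chi_or (E' : Finset (V × V)) (a : V × V) : chi E' a = a ∨ chi E' a = drev a := by
  unfold chi; split_ifs <;> simp

lemma key_main {E : Finset (V × V)} (hE_symm : ∀ e, e ∈ E ↔ drev e ∈ E)
    (hE_ne : ∀ e ∈ E, e.1 ≠ e.2)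
    {d : V → ℤ} {w : V × V → ℝ} (hw : ∀ e ∈ E, 0 < w e)
    {A : Finset (V × V) → Finset (V × V)} (hA : GoodA E d w A)
    {E' : Finset (V × V)} (hE' : IsOrientation E E')
    {D : Finset (V × V)} (hD : D ⊆ E) (hDf : AdmitsFlow E D d)
    {a : V × V} (haE : a ∈ E) (haD : a ∈ D) (hrevD : drev a ∉ D) :
    phiE E d A E' a (psiE E d A E' a D) = D ∧
    phiE E d A E' (drev a) (psiE E d A E' a D) = D := by
  have hrevE : drev a ∈ E := (hE_symm a).mp haE
  have hne : a.1 ≠ a.2 := hE_ne a haE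
  have hane : a ≠ drev a := ne_drev hne
  -- set identities
  have s1 : oplus (padd D a) a = D := by
    ext x
    by_cases hx1 : x = a
    · subst hx1; simp [oplus, padd, haD, hane]
    · by_cases hx2 : x = drev a
      · subst hx2; simp [oplus, padd, hrevD]
      · simp [oplus, padd, hx1, hx2]
  have s2 : oplus (psub D a) a = D := by
    ext x
    by_cases hx1 : x = a
    · subst hx1; simp [oplus, psub, haD, hane]
    · by_cases hx2 : x = drev a
      · subst hx2; simp [oplus, psub, hrevD]
      · simp [oplus, psub, hx1, hx2]
  have s3 : oplus (padd D a) (drev a) = oplus (psub D a) (drev a) := by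
    ext x
    by_cases hx1 : x = a
    · subst hx1; simp [oplus, padd, psub, hane, drev_drev]
    · by_cases hx2 : x = drev a
      · subst hx2; simp [oplus, padd, psub, drev_drev, Ne.symm hane]
      · simp [oplus, padd, psub, hx1, hx2, drev_drev]
  have hDmD : psub D a ⊆ D := Finset.sdiff_subset
  have hDDp : D ⊆ padd D a := Finset.subset_union_left
  have hDpE : padd D a ⊆ E := by
    intro x hx
    rcases Finset.mem_union.mp hx with h | h
    · exact hD h
    · rcases Finset.mem_insert.mp h with rfl | h
      · exact haE
      · rw [Finset.mem_singleton.mp h]; exact hrevE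
  have hDfp : AdmitsFlow E (padd D a) d := by
    obtain ⟨f, hf⟩ := hDf; exact ⟨f, hf.mono hDDp⟩
  have hADsub : A D ⊆ D := A_subset hA hD hDf
  have hApsub : A (padd D a) ⊆ padd D a := A_subset hA hDpE hDfp
  have haDm : a ∉ psub D a := by simp [psub]
  have hrevDm : drev a ∉ psub D a := by simp [psub]
  have haDp : a ∈ padd D a := by simp [padd]
  have hrevDp : drev a ∈ padd D a := by simp [padd]
  have haDr : a ∉ oplus (psub D a) (drev a) := by
    simp [oplus, psub, drev_drev, hane]
  have hrevDr : drev a ∈ oplus (psub D a) (drev a) := by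
    simp [oplus, psub, drev_drev, Ne.symm hane]
  have hDrp : oplus (psub D a) (drev a) ⊆ padd D a := by
    intro x hx
    simp only [oplus, psub, Finset.mem_sdiff, Finset.mem_insert, Finset.mem_singleton,
      padd, Finset.mem_union] at hx ⊢
    tauto
  have hDmr : psub D a ⊆ oplus (psub D a) (drev a) := by
    intro x hx
    simp only [oplus, Finset.mem_sdiff, Finset.mem_insert, Finset.mem_singleton, drev_drev]
    refine ⟨Or.inr hx, ?_⟩
    rintro rfl
    exact (Finset.mem_sdiff.mp hx).2 (by simp)
  have hDrsub : ∀ x ∈ padd D a, x ≠ a → x ∈ oplus (psub D a) (drev a) := by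
    intro x hx hxa
    simp only [padd, Finset.mem_union, Finset.mem_insert, Finset.mem_singleton] at hx
    simp only [oplus, psub, Finset.mem_sdiff, Finset.mem_insert, Finset.mem_singleton, drev_drev]
    tauto
  -- main case split
  by_cases hAeq : A (padd D a) = A D
  · -- A Dp = A D
    have hEq1 : AEq E d A D (padd D a) := ⟨hDf, hDfp, hAeq.symm⟩
    by_cases hm : AEq E d A D (psub D a)
    · -- case 3
      have hDfm := hm.2.1
      have hAm : A D = A (psub D a) := hm.2.2
      have haA : a ∉ A D := by
        intro h
        have hADm : A D ⊆ psub D a := by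
          rw [hAm]; exact A_subset hA (hDmD.trans hD) hDfm
        exact haDm (hADm h)
      have hsub' : A (padd D a) ⊆ oplus (psub D a) (drev a) := by
        rw [hAeq, hAm]
        exact (A_subset hA (hDmD.trans hD) hDfm).trans hDmr
      obtain ⟨hDfr, hAr⟩ := sandwich hA hDrp hDpE hDfp hsub'
      have hEqpr : AEq E d A (padd D a) (oplus (psub D a) (drev a)) := ⟨hDfp, hDfr, hAr.symm⟩
      have hEqmr : AEq E d A (psub D a) (oplus (psub D a) (drev a)) :=
        ⟨hDfm, hDfr, by rw [← hAm, hAr, hAeq]⟩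
      have hEqpD : AEq E d A (padd D a) D := ⟨hDfp, hDf, hAeq⟩
      have hEqmD : AEq E d A (psub D a) D := ⟨hDfm, hDf, hAm.symm⟩
      have hpsi : psiE E d A E' a D = if chi E' a ∈ D then padd D a else psub D a := by
        unfold psiE
        rw [if_neg (not_not_intro hEq1), if_neg (not_not_intro hm)]
      rcases chi_or E' a with hchi | hchi
      · have hchiD : chi E' a ∈ D := by rw [hchi]; exact haD
        rw [hpsi, if_pos hchiD]
        constructor
        · unfold phiE
          rw [s1, s3, if_neg (not_not_intro hEqpD), if_neg (not_not_intro hEqpr),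
            if_pos haDp, hchi, s1]
        · unfold phiE
          rw [drev_drev, s1, s3, if_neg (not_not_intro hEqpr), if_neg (not_not_intro hEqpD),
            if_pos hrevDp, chi_drev hE' haE, hchi, s1]
      · have hchiD : chi E' a ∉ D := by rw [hchi]; exact hrevD
        rw [hpsi, if_neg hchiD]
        constructor
        · unfold phiE
          rw [s2, if_neg (not_not_intro hEqmD), if_neg (not_not_intro hEqmr),
            if_neg haDm, hchi, drev_drev, s2]
        · unfold phiE
          rw [drev_drev, s2, if_neg (not_not_intro hEqmr), if_neg (not_not_intro hEqmD),
            if_neg hrevDm, chi_drev hE' haE, hchi, drev_drev, s2]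
    · -- case 2
      have haA : a ∈ A D := by
        by_contra haA
        have hsub' : A D ⊆ psub D a := by
          intro x hx
          simp only [psub, Finset.mem_sdiff, Finset.mem_insert, Finset.mem_singleton]
          exact ⟨hADsub hx, by rintro (rfl | rfl); exacts [haA hx, hrevD (hADsub hx)]⟩
        obtain ⟨hDfm, hAm⟩ := sandwich hA hDmD hD hDf hsub'
        exact hm ⟨hDf, hDfm, hAm.symm⟩
      have hpsi : psiE E d A E' a D = padd D a := by
        unfold psiE
        rw [if_neg (not_not_intro hEq1), if_pos hm]
      have hEqpD : AEq E d A (padd D a) D := ⟨hDfp, hDf, hAeq⟩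
      have hnEqpr : ¬ AEq E d A (padd D a) (oplus (psub D a) (drev a)) := by
        rintro ⟨_, hDfr, hAr⟩
        have : a ∈ A (oplus (psub D a) (drev a)) := by rw [← hAr, hAeq]; exact haA
        exact haDr (A_subset hA (hDrp.trans hDpE) hDfr this)
      rw [hpsi]
      constructor
      · unfold phiE
        rw [s1, s3, if_neg (not_not_intro hEqpD), if_pos hnEqpr]
      · unfold phiE
        rw [drev_drev, s3, if_pos hnEqpr, s1]
  · -- case 1 : A Dp ≠ A D
    have hrevAp : drev a ∈ A (padd D a) := by
      by_contra hc
      have hsub' : A (padd D a) ⊆ D := by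
        intro x hx
        have := hApsub hx
        simp only [padd, Finset.mem_union, Finset.mem_insert, Finset.mem_singleton] at this
        rcases this with h | rfl | rfl
        · exact h
        · exact haD
        · exact absurd hx hc
      obtain ⟨_, hAD⟩ := sandwich hA hDDp hDpE hDfp hsub'
      exact hAeq hAD.symm   -- hAD : A D = A (padd D a)
    have haAp : a ∉ A (padd D a) := fun h =>
      A_not_both hA hw haE hrevE hne hDpE hDfp h hrevAp
    have hsub' : A (padd D a) ⊆ oplus (psub D a) (drev a) := fun x hx =>
      hDrsub x (hApsub hx) (fun hxa => haAp (hxa ▸ hx))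
    obtain ⟨hDfr, hAr⟩ := sandwich hA hDrp hDpE hDfp hsub'
    -- a ∉ A D via midpoint argument
    have haA : a ∉ A D := by
      intro haA
      obtain ⟨hminD, _⟩ := hA D hD hDf
      obtain ⟨hminP, _⟩ := hA (padd D a) hDpE hDfp
      have hrevA : drev a ∉ A D := fun h => hrevD (hADsub h)
      set f := ind (A D) with hf
      set g := ind (A (padd D a)) with hg
      have hfp : IsFlow E (padd D a) d f := hminD.1.mono hDDp
      have hmid : IsFlow E (padd D a) d (fun x => (f x + g x) / 2) :=
        midpoint_flow hfp hminP.1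
      have hval : (fun x => (f x + g x) / 2) a = (fun x => (f x + g x) / 2) (drev a) := by
        simp only [hf, hg, ind, if_pos haA, if_neg haAp, if_neg hrevA, if_pos hrevAp]
        norm_num
      have hcan := cancel_conserv haE hrevE hne hmid hval
      -- it is in fact a flow on D
      have hflowD : IsFlow E D d
          (fun x => if x = a ∨ x = drev a then 0 else (f x + g x) / 2) := by
        refine ⟨hcan.1, ?_, hcan.2.2⟩
        intro x hx
        by_cases hxx : x = a ∨ x = drev a
        · simp [hxx]
        · push_neg at hxx
          have hfx : f x = 0 := by
            simp only [hf, ind, if_neg (fun h => hx (hADsub h))]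
          have hgx : g x = 0 := by
            have : x ∉ A (padd D a) := by
              intro h
              have := hApsub h
              simp only [padd, Finset.mem_union, Finset.mem_insert,
                Finset.mem_singleton] at this
              rcases this with h' | h' | h'
              · exact hx h'
              · exact hxx.1 h'
              · exact hxx.2 h'
            simp only [hg, ind, if_neg this]
          simp only [hxx.1, hxx.2, or_self, if_false, hfx, hgx]
          norm_num
      have hcost := cancel_cost (w := w) (h := fun x => (f x + g x) / 2) haE hrevE hne
      have hmidcost : flowCost E w (fun x => (f x + g x) / 2)
          = (flowCost E w f + flowCost E w g) / 2 := midpoint_cost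
      have hlt : flowCost E w g < flowCost E w f := cost_lt hA hDDp hDpE hDf hAeq
      have hva : (fun x => (f x + g x) / 2) a = 1 / 2 := by
        simp only [hf, hg, ind, if_pos haA, if_neg haAp]; norm_num
      have hvr : (fun x => (f x + g x) / 2) (drev a) = 1 / 2 := by
        simp only [hf, hg, ind, if_neg hrevA, if_pos hrevAp]; norm_num
      have hle := hminD.2 _ hflowD
      beta_reduce at hva hvr
      rw [hcost, hmidcost, hva, hvr] at hle
      have hw1 := hw a haE
      have hw2 := hw (drev a) hrevE
      linarith
    have hrevA : drev a ∉ A D := fun h => hrevD (hADsub h)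
    have hsubm : A D ⊆ psub D a := by
      intro x hx
      simp only [psub, Finset.mem_sdiff, Finset.mem_insert, Finset.mem_singleton]
      exact ⟨hADsub hx, by rintro (rfl | rfl); exacts [haA hx, hrevA hx]⟩
    obtain ⟨hDfm, hAm⟩ := sandwich hA hDmD hD hDf hsubm
    have hnEq1 : ¬ AEq E d A D (padd D a) := fun h => hAeq h.2.2.symm
    have hpsi : psiE E d A E' a D = psub D a := by
      unfold psiE
      rw [if_pos hnEq1]
    have hEqmD : AEq E d A (psub D a) D := ⟨hDfm, hDf, hAm⟩
    have hnEqmr : ¬ AEq E d A (psub D a) (oplus (psub D a) (drev a)) := by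
      rintro ⟨_, _, hEq⟩
      rw [hAm, hAr] at hEq
      exact hAeq hEq.symm
    rw [hpsi]
    constructor
    · unfold phiE
      rw [s2, if_neg (not_not_intro hEqmD), if_pos hnEqmr]
    · unfold phiE
      rw [drev_drev, if_pos hnEqmr, s2]

end AuxLemmas


theorem phiE_psiE_of_one
    {V : Type*} [Fintype V] [DecidableEq V]
    (E : Finset (V × V)) (hE_symm : ∀ e, e ∈ E ↔ drev e ∈ E)
    (hE_ne : ∀ e ∈ E, e.1 ≠ e.2)
    (d : V → ℤ) (hd : ∑ u : V, d u = 0)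
    (w : V × V → ℝ) (hw : ∀ e ∈ E, 0 < w e)
    (A : Finset (V × V) → Finset (V × V)) (hA : GoodA E d w A)
    (E' : Finset (V × V)) (hE' : IsOrientation E E')
    (D : Finset (V × V)) (hD : D ⊆ E) (hDf : AdmitsFlow E D d)
    (e : V × V) (he : e ∈ E)
    (hDe : e ∈ D ↔ drev e ∉ D) :
    phiE E d A E' e (psiE E d A E' e D) = D := by
  by_cases haD : e ∈ D
  · have hrev : drev e ∉ D := hDe.mp haD
    exact (key_main hE_symm hE_ne hw hA hE' hD hDf he haD hrev).1
  · have hrev : drev e ∈ D := by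
      by_contra hc
      exact haD (hDe.mpr hc)
    have hrevE : drev e ∈ E := (hE_symm e).mp he
    have h2 : drev (drev e) ∉ D := by rw [drev_drev]; exact haD
    have hk := (key_main hE_symm hE_ne hw hA hE' hD hDf hrevE hrev h2).2
    rw [drev_drev, psiE_drev hE' he] at hk
    exact hk
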